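/- For every graph G of order n with minimum degree δ(G) ≥ 1, the strength of G satisfies str(G) ≥ n + δ(G). -/
import Mathlib


open SimpleGraph Finset

/-- `strf G f` is the maximum edge label `f(u)+f(v)` for the numbering given by the
equivalence `f` (vertex `v` receives label `(f v : ℕ) + 1 ∈ {1,…,n}`). -/
noncomputable def strf {V : Type*} [Fintype V] (G : SimpleGraph V)
    (f : V ≃ Fin (Fintype.card V)) : ℕ :=
  sSup {s | ∃ u v, G.Adj u v ∧ s = ((f u : ℕ) + 1) + ((f v : ℕ) + 1)}

/-- The strength of a graph: minimum over numberings of the maximum edge label. -/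
noncomputable def strength {V : Type*} [Fintype V] (G : SimpleGraph V) : ℕ :=
  sInf {s | ∃ f : V ≃ Fin (Fintype.card V), s = strf G f}

/-- The independence number of a graph. -/
noncomputable def indepNum {V : Type*} [Fintype V] (G : SimpleGraph V) : ℕ :=
  sSup {k | ∃ s : Finset V, (s : Set V).Pairwise (fun u v => ¬ G.Adj u v) ∧ s.card = k}

theorem strength_ge_card_add_minDegree {V : Type*} [Fintype V] (G : SimpleGraph V)
    [DecidableRel G.Adj] (hδ : 1 ≤ G.minDegree) :
    Fintype.card V + G.minDegree ≤ strength G := by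
  set n := Fintype.card V with hn
  have hV : Nonempty V := by
    by_contra h
    have : IsEmpty V := not_nonempty_iff.mp h
    have : G.minDegree = 0 := by
      simp [SimpleGraph.minDegree, Finset.univ_eq_empty]
    omega
  have hnpos : 0 < n := Fintype.card_pos
  refine le_csInf ⟨strf G (Fintype.equivFin V), ⟨_, rfl⟩⟩ ?_
  rintro s ⟨f, rfl⟩
  -- the vertex labeled n
  set u := f.symm ⟨n - 1, by omega⟩ with hu
  have hfu : (f u : ℕ) = n - 1 := by simp [hu]
  -- neighbors of u have at least δ distinct labels
  set T := (G.neighborFinset u).image (fun v => (f v : ℕ)) with hT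
  have hcardT : G.minDegree ≤ T.card := by
    rw [hT, Finset.card_image_of_injective _ (fun a b hab => f.injective (Fin.ext hab)),
      SimpleGraph.card_neighborFinset_eq_degree]
    exact G.minDegree_le_degree u
  have hTne : T.Nonempty := Finset.card_pos.mp (by omega)
  have hmax : T.card ≤ T.max' hTne + 1 := by
    have hsub : T ⊆ Finset.range (T.max' hTne + 1) := by
      intro x hx
      exact Finset.mem_range.mpr (Nat.lt_succ_of_le (Finset.le_max' T x hx))
    simpa using Finset.card_le_card hsub
  obtain ⟨v, hv, hfv⟩ := Finset.mem_image.mp (T.max'_mem hTne)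
  have hadj : G.Adj u v := (SimpleGraph.mem_neighborFinset _ _ _).mp hv
  have hvne : v ≠ u := fun h => (G.irrefl (h ▸ hadj))
  have hfvlt : (f v : ℕ) < n := (f v).isLt
  have hfvne : (f v : ℕ) ≠ n - 1 := by
    intro h
    exact hvne (f.injective (Fin.ext (h.trans hfu.symm)))
  -- the edge u v witnesses a large sum
  have hmem : ((f u : ℕ) + 1) + ((f v : ℕ) + 1) ∈
      {s | ∃ a b, G.Adj a b ∧ s = ((f a : ℕ) + 1) + ((f b : ℕ) + 1)} :=
    ⟨u, v, hadj, rfl⟩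
  have hbdd : BddAbove {s | ∃ a b, G.Adj a b ∧ s = ((f a : ℕ) + 1) + ((f b : ℕ) + 1)} := by
    refine ⟨2 * n, ?_⟩
    rintro x ⟨a, b, -, rfl⟩
    have := (f a).isLt
    have := (f b).isLt
    omega
  have hle := le_csSup hbdd hmem
  have : n + G.minDegree ≤ ((f u : ℕ) + 1) + ((f v : ℕ) + 1) := by omega
  exact this.trans hle
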